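/- Let n ≥ 2 and q ≥ 2 be integers, let h be a real-valued function defined on {1 - 2ℓ/n : ℓ = 1,…,n}, and let f : ℝ → ℝ be a real polynomial such that (i) f(1 - 2ℓ/n) ≤ h(1 - 2ℓ/n) for every integer ℓ with 1 ≤ ℓ ≤ n; and (ii) for every subset C' ⊆ H(n,q) one has ∑_{x,y ∈ C'} f(1 - 2·d_H(x,y)/n) ≥ f₀·|C'|² (sum over all ordered pairs, including x = y), where f₀ := q^{-n} ∑_{ℓ=0}^{n} C(n,ℓ)(q-1)^ℓ f(1 - 2ℓ/n). Then every code C ⊆ H(n,q) with |C| = M ≥ 2 satisfies ∑_{x,y ∈ C, x ≠ y} h(1 - 2·d_H(x,y)/n) ≥ f₀·M² − M·f(1). -/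
import Mathlib


/-- The zeroth Krawtchouk coefficient
`f₀ = q^{-n} ∑_{ℓ=0}^n C(n,ℓ)(q-1)^ℓ f(1 - 2ℓ/n)`. -/
noncomputable def fZeroHamming (n q : ℕ) (f : Polynomial ℝ) : ℝ :=
  (∑ ℓ ∈ Finset.range (n + 1),
      (n.choose ℓ : ℝ) * ((q : ℝ) - 1) ^ ℓ * f.eval (1 - 2 * (ℓ : ℝ) / n)) / (q : ℝ) ^ n

/-- The `h`-energy of a code `C ⊆ H(n,q)`: the sum of `h(1 - 2 d_H(x,y)/n)` over ordered
pairs of distinct codewords of `C`. -/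
noncomputable def hammingEnergy (n q : ℕ) (h : ℝ → ℝ) (C : Finset (Fin n → Fin q)) : ℝ :=
  ∑ p ∈ C.offDiag, h (1 - 2 * (hammingDist p.1 p.2 : ℝ) / n)

/-- The linear programming lower bound for the minimal energy of codes in Hamming space. -/
theorem lp_lower_bound_energy_hamming
    (n q : ℕ) (hn : 2 ≤ n) (hq : 2 ≤ q) (h : ℝ → ℝ) (f : Polynomial ℝ)
    (hC1 : ∀ ℓ : ℕ, 1 ≤ ℓ → ℓ ≤ n →
      f.eval (1 - 2 * (ℓ : ℝ) / n) ≤ h (1 - 2 * (ℓ : ℝ) / n))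
    (hA2 : ∀ C' : Finset (Fin n → Fin q),
      fZeroHamming n q f * (C'.card : ℝ) ^ 2 ≤
        ∑ x ∈ C', ∑ y ∈ C', f.eval (1 - 2 * (hammingDist x y : ℝ) / n))
    (M : ℕ) (hM : 2 ≤ M)
    (C : Finset (Fin n → Fin q)) (hcard : C.card = M) :
    fZeroHamming n q f * (M : ℝ) ^ 2 - (M : ℝ) * f.eval 1 ≤ hammingEnergy n q h C := by

  have key := hA2 C
  rw [hcard] at key
  -- split double sum into diagonal and off-diagonal
  have hsplit : ∑ x ∈ C, ∑ y ∈ C, f.eval (1 - 2 * (hammingDist x y : ℝ) / n)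
      = (M : ℝ) * f.eval 1 +
        ∑ p ∈ C.offDiag, f.eval (1 - 2 * (hammingDist p.1 p.2 : ℝ) / n) := by
    rw [← Finset.sum_product', ← Finset.diag_union_offDiag C, Finset.sum_union (Finset.disjoint_diag_offDiag C)]
    congr 1
    rw [Finset.sum_diag]
    simp [hammingDist_self, hcard]
  have hmono : ∑ p ∈ C.offDiag, f.eval (1 - 2 * (hammingDist p.1 p.2 : ℝ) / n)
      ≤ hammingEnergy n q h C := by
    apply Finset.sum_le_sum
    intro p hp
    rw [Finset.mem_offDiag] at hp
    have h1 : 1 ≤ hammingDist p.1 p.2 := Nat.one_le_iff_ne_zero.mpr (by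
      simp [hammingDist_eq_zero, hp.2.2])
    have h2 : hammingDist p.1 p.2 ≤ n := by
      simpa using hammingDist_le_card_fintype (x := p.1) (y := p.2)
    exact hC1 _ h1 h2
  rw [hsplit] at key
  unfold hammingEnergy at hmono ⊢
  linarith
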